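/- Let A be an m×L matrix with entries in {0,1}, let b ∈ ℕ^L be a solution of A·x = c whose first k entries are positive and remaining entries are zero, and suppose there exist distinct disjoint subsets J, J' of {1,…,k} with J nonempty such that the sum of the columns of A indexed by J equals the sum of the columns indexed by J'. Then there exists a solution b* ∈ ℕ^L of A·x = c with strictly fewer non-zero entries than b. -/

import Mathlib

theorem reduce_nonzero_entries (m L k : ℕ)
    (A : Matrix (Fin m) (Fin L) ℕ) (hA : ∀ i j, A i j = 0 ∨ A i j = 1)
    (c : Fin m → ℕ) (b : Fin L → ℕ) (hb : A.mulVec b = c)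
    (hkL : k ≤ L)
    (hpos : ∀ j : Fin L, (j : ℕ) < k → 0 < b j)
    (hzero : ∀ j : Fin L, k ≤ (j : ℕ) → b j = 0)
    (J J' : Finset (Fin L))
    (hJk : ∀ j ∈ J, (j : ℕ) < k) (hJ'k : ∀ j ∈ J', (j : ℕ) < k)
    (hne : J ≠ J') (hdisj : Disjoint J J') (hJnonempty : J.Nonempty)
    (hcols : ∀ i, ∑ j ∈ J, A i j = ∑ j ∈ J', A i j) :
    ∃ bstar : Fin L → ℕ, A.mulVec bstar = c ∧
      (Finset.univ.filter (fun j => bstar j ≠ 0)).card <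
        (Finset.univ.filter (fun j => b j ≠ 0)).card := by
  obtain ⟨j0, hj0J, hj0min⟩ := J.exists_min_image b hJnonempty
  set t := b j0 with ht
  have hdj : ∀ j ∈ J', j ∉ J := fun j hj hjJ => (Finset.disjoint_left.mp hdisj) hjJ hj
  set bstar : Fin L → ℕ := fun j => if j ∈ J then b j - t else if j ∈ J' then b j + t else b j
    with hbstar
  refine ⟨bstar, ?_, ?_⟩
  · funext i
    rw [← congrFun hb i]
    simp only [Matrix.mulVec, dotProduct]
    have hsplit : ∀ f : Fin L → ℕ, ∑ j, f j
        = ∑ j ∈ Finset.univ \ (J ∪ J'), f j + (∑ j ∈ J, f j + ∑ j ∈ J', f j) := by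
      intro f
      rw [← Finset.sum_union hdisj, Finset.sum_sdiff (Finset.subset_univ _)]
    rw [hsplit (fun j => A i j * bstar j), hsplit (fun j => A i j * b j)]
    have e1 : ∑ j ∈ J, A i j * bstar j + ∑ j ∈ J, t * A i j = ∑ j ∈ J, A i j * b j := by
      rw [← Finset.sum_add_distrib]
      refine Finset.sum_congr rfl fun j hj => ?_
      have hle : t ≤ b j := hj0min j hj
      simp only [hbstar, if_pos hj]
      rw [mul_comm t, ← Nat.mul_add, Nat.sub_add_cancel hle]
    have e2 : ∑ j ∈ J', A i j * bstar j = ∑ j ∈ J', A i j * b j + ∑ j ∈ J', t * A i j := by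
      rw [← Finset.sum_add_distrib]
      refine Finset.sum_congr rfl fun j hj => ?_
      simp [hbstar, hdj j hj, hj, mul_add, mul_comm]
    have e3 : ∑ j ∈ Finset.univ \ (J ∪ J'), A i j * bstar j
        = ∑ j ∈ Finset.univ \ (J ∪ J'), A i j * b j := by
      refine Finset.sum_congr rfl fun j hj => ?_
      simp only [Finset.mem_sdiff, Finset.mem_union] at hj
      have h1 : j ∉ J := fun h => hj.2 (Or.inl h)
      have h2 : j ∉ J' := fun h => hj.2 (Or.inr h)
      simp [hbstar, h1, h2]
    have e4 : ∑ j ∈ J, t * A i j = ∑ j ∈ J', t * A i j := by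
      rw [← Finset.mul_sum, ← Finset.mul_sum, hcols i]
    linarith
  · apply Finset.card_lt_card
    constructor
    · intro j hj
      simp only [Finset.mem_filter, Finset.mem_univ, true_and] at hj ⊢
      intro hbj
      apply hj
      have hk : ¬ ((j : ℕ) < k) := fun h => (hpos j h).ne' hbj
      have hjJ : j ∉ J := fun h => hk (hJk j h)
      have hjJ' : j ∉ J' := fun h => hk (hJ'k j h)
      simp [hbstar, hjJ, hjJ', hbj]
    · intro hsub
      have hj0 : j0 ∈ Finset.univ.filter (fun j => b j ≠ 0) := by
        simp only [Finset.mem_filter, Finset.mem_univ, true_and]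
        exact (hpos j0 (hJk j0 hj0J)).ne'
      have := hsub hj0
      simp only [Finset.mem_filter, Finset.mem_univ, true_and] at this
      apply this
      simp [hbstar, hj0J, ht]
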